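/- arXiv:1711.08860 — 6 statements merged into one kernel-verified Lean document; each statement's English description precedes it below -/
import Mathlib

section
/- For every real n×n matrix B all of whose leading principal minors are positive, there exists an upper-triangular n×n matrix C with all diagonal entries equal to 1 such that the product B*C is symmetric. -/
open Matrix

/-- The determinant of the top-left `r × r` submatrix of `B`. -/
def leadMinor {n : ℕ} (B : Matrix (Fin n) (Fin n) ℝ) (r : ℕ) (h : r ≤ n) : ℝ :=
  (B.submatrix (Fin.castLE h) (Fin.castLE h)).det

theorem stmt0 {n : ℕ} (B : Matrix (Fin n) (Fin n) ℝ)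
    (hB : ∀ r : ℕ, 1 ≤ r → ∀ h : r ≤ n, 0 < leadMinor B r h) :
    ∃ C : Matrix (Fin n) (Fin n) ℝ,
      C.BlockTriangular id ∧ (∀ i, C i i = 1) ∧ (B * C).IsSymm := by
  induction n with
  | zero =>
    refine ⟨1, Matrix.blockTriangular_one, fun i => i.elim0, ?_⟩
    ext i j
    exact i.elim0
  | succ n ih =>
    set A : Matrix (Fin n) (Fin n) ℝ := B.submatrix Fin.castSucc Fin.castSucc with hAdef
    have hcast : ∀ (r : ℕ) (h : r ≤ n),
        (Fin.castSucc ∘ Fin.castLE h : Fin r → Fin (n+1)) = Fin.castLE (h.trans n.le_succ) := by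
      intro r h
      funext k
      ext
      simp
    have hA : ∀ r : ℕ, 1 ≤ r → ∀ h : r ≤ n, 0 < leadMinor A r h := by
      intro r hr h
      have : leadMinor A r h = leadMinor B r (h.trans n.le_succ) := by
        simp only [leadMinor, hAdef, Matrix.submatrix_submatrix, hcast]
      rw [this]
      exact hB r hr _
    obtain ⟨C₀, hC₀tri, hC₀diag, hC₀sym⟩ := ih A hA
    have hAeq : A = B.submatrix (Fin.castLE n.le_succ) (Fin.castLE n.le_succ) := by
      rw [hAdef]
      congr 1
    have hAdet : A.det ≠ 0 := by
      rcases Nat.eq_zero_or_pos n with hn | hn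
      · subst hn
        simp [Matrix.det_isEmpty]
      · rw [hAeq]
        exact (hB n hn n.le_succ).ne'
    -- the vector we must match in the last column
    set w : Fin n → ℝ := fun i' => ∑ k', B (Fin.last n) (Fin.castSucc k') * C₀ k' i' with hw
    set b : Fin n → ℝ := fun i' => B (Fin.castSucc i') (Fin.last n) with hb
    set x : Fin n → ℝ := A⁻¹.mulVec (w - b) with hx
    have hAx : A.mulVec x = w - b := by
      rw [hx, Matrix.mulVec_mulVec, Matrix.mul_nonsing_inv A (isUnit_iff_ne_zero.mpr hAdet), Matrix.one_mulVec]
    set C : Matrix (Fin (n+1)) (Fin (n+1)) ℝ := Matrix.of fun i j =>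
      Fin.lastCases (motive := fun _ => ℝ)
        (Fin.lastCases (motive := fun _ => ℝ) 1 x i)
        (fun j' => Fin.lastCases (motive := fun _ => ℝ) 0 (fun i' => C₀ i' j') i) j
      with hC
    have hCcc : ∀ i' j', C (Fin.castSucc i') (Fin.castSucc j') = C₀ i' j' := by
      intro i' j'; simp [hC]
    have hCcl : ∀ i', C (Fin.castSucc i') (Fin.last n) = x i' := by
      intro i'; simp [hC]
    have hClc : ∀ j', C (Fin.last n) (Fin.castSucc j') = 0 := by
      intro j'; simp [hC]
    have hCll : C (Fin.last n) (Fin.last n) = 1 := by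
      simp [hC]
    refine ⟨C, ?_, ?_, ?_⟩
    · intro i j hij
      simp only [id] at hij
      induction j using Fin.lastCases with
      | last => exact absurd hij (by simp [Fin.le_last, not_lt])
      | cast j' =>
        induction i using Fin.lastCases with
        | last => exact hClc j'
        | cast i' =>
          rw [hCcc]
          exact hC₀tri (by simpa using hij)
    · intro i
      induction i using Fin.lastCases with
      | last => exact hCll
      | cast i' => rw [hCcc]; exact hC₀diag i'
    · rw [Matrix.IsSymm]
      ext i j
      rw [Matrix.transpose_apply]
      -- key entry computations
      have key_cc : ∀ i' j', (B * C) (Fin.castSucc i') (Fin.castSucc j') = (A * C₀) i' j' := by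
        intro i' j'
        rw [Matrix.mul_apply, Matrix.mul_apply, Fin.sum_univ_castSucc]
        simp [hCcc, hClc, hAdef]
      have key_cl : ∀ i', (B * C) (Fin.castSucc i') (Fin.last n) = w i' := by
        intro i'
        rw [Matrix.mul_apply, Fin.sum_univ_castSucc]
        have : ∑ k', B (Fin.castSucc i') (Fin.castSucc k') * C (Fin.castSucc k') (Fin.last n)
            = A.mulVec x i' := by
          rw [Matrix.mulVec, dotProduct]
          congr 1
          funext k'
          rw [hCcl]
          rfl
        rw [this, hAx, hCll]
        simp [hb]
      have key_lc : ∀ j', (B * C) (Fin.last n) (Fin.castSucc j') = w j' := by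
        intro j'
        rw [Matrix.mul_apply, Fin.sum_univ_castSucc]
        simp [hCcc, hClc, hw]
      induction i using Fin.lastCases with
      | last =>
        induction j using Fin.lastCases with
        | last => rfl
        | cast j' => rw [key_cl, key_lc]
      | cast i' =>
        induction j using Fin.lastCases with
        | last => rw [key_cl, key_lc]
        | cast j' =>
          rw [key_cc, key_cc]
          exact hC₀sym.apply i' j'
end

section
/- If g is an n×n real positive definite symmetric matrix and g = b k where b is upper triangular with positive diagonal entries and k is orthogonal, then every leading principal minor of k is positive. -/
open Matrix

/-- Sum over `Fin n` of a function vanishing above `r` equals the sum over `Fin r`. -/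
lemma sum_castLE {n r : ℕ} (h : r ≤ n) (F : Fin n → ℝ)
    (hF : ∀ l : Fin n, r ≤ (l : ℕ) → F l = 0) :
    ∑ l : Fin n, F l = ∑ l : Fin r, F (Fin.castLE h l) := by
  have h1 : ∑ l : Fin n, F l = ∑ l ∈ Finset.univ.map (Fin.castLEEmb h), F l := by
    symm
    apply Finset.sum_subset (Finset.subset_univ _)
    intro l _ hl
    apply hF
    by_contra hlt
    push_neg at hlt
    exact hl (by simpa using ⟨⟨(l : ℕ), hlt⟩, by simp [Fin.castLEEmb, Fin.ext_iff]⟩)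
  rw [h1, Finset.sum_map]
  rfl

lemma posDef_submatrix_castLE {n r : ℕ} (h : r ≤ n) {M : Matrix (Fin n) (Fin n) ℝ}
    (hM : M.PosDef) : (M.submatrix (Fin.castLE h) (Fin.castLE h)).PosDef := by
  refine posDef_iff_dotProduct_mulVec.mpr ⟨?_, ?_⟩
  · exact hM.1.submatrix _
  · intro x hx
    set y : Fin n → ℝ := fun j => if hj : (j : ℕ) < r then x ⟨j, hj⟩ else 0 with hy
    have hyc : ∀ l : Fin r, y (Fin.castLE h l) = x l := by
      intro l; simp [hy, l.isLt]
    have hy0 : ∀ l : Fin n, r ≤ (l : ℕ) → y l = 0 := by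
      intro l hl; simp [hy, Nat.not_lt.mpr hl]
    have hyne : y ≠ 0 := by
      intro h0
      apply hx
      funext i
      have := congrFun h0 (Fin.castLE h i)
      rwa [hyc] at this
    have key : dotProduct (star x) ((M.submatrix (Fin.castLE h) (Fin.castLE h)) *ᵥ x)
        = dotProduct (star y) (M *ᵥ y) := by
      simp only [dotProduct, mulVec, star, Pi.star_apply, star_trivial, id_eq]
      rw [sum_castLE h (fun j => y j * ∑ l, M j l * y l)
        (fun l hl => by simp [hy0 l hl])]
      refine Finset.sum_congr rfl fun i _ => ?_
      rw [hyc]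
      congr 1
      rw [sum_castLE h (fun l => M (Fin.castLE h i) l * y l)
        (fun l hl => by simp [hy0 l hl])]
      refine Finset.sum_congr rfl fun j _ => ?_
      rw [hyc, submatrix_apply]
    rw [key]
    exact hM.dotProduct_mulVec_pos hyne

theorem stmt5 {n : ℕ} (g b k : Matrix (Fin n) (Fin n) ℝ)
    (hg : g.PosDef) (hgbk : g = b * k)
    (hb : b.BlockTriangular id) (hbd : ∀ i, 0 < b i i)
    (hk : kᵀ * k = 1) :
    ∀ r : ℕ, 1 ≤ r → ∀ h : r ≤ n, 0 < leadMinor k r h := by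
  intro r _ h
  have hkk : k * kᵀ = 1 := mul_eq_one_comm.mp hk
  -- b = g * kᵀ
  have hbgk : b = g * kᵀ := by
    rw [hgbk, Matrix.mul_assoc, hkk, Matrix.mul_one]
  -- kᵀ = g⁻¹ * b
  have hktr : kᵀ = g⁻¹ * b := by
    rw [hbgk, ← Matrix.mul_assoc, Matrix.nonsing_inv_mul g hg.det_pos.ne'.isUnit, Matrix.one_mul]
  set f := Fin.castLE h with hf
  -- top-left submatrix of a product with upper-triangular right factor
  have hsub : (kᵀ).submatrix f f = (g⁻¹).submatrix f f * b.submatrix f f := by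
    ext i j
    rw [hktr]
    simp only [submatrix_apply, Matrix.mul_apply]
    rw [sum_castLE h (fun l => g⁻¹ (f i) l * b l (f j)) (fun l hl => by
      have : b l (f j) = 0 := hb (by
        show (f j : ℕ) < (l : ℕ)
        exact lt_of_lt_of_le (Fin.is_lt j) hl)
      simp [this])]
  have hdkt : ((kᵀ).submatrix f f).det
      = ((g⁻¹).submatrix f f).det * (b.submatrix f f).det := by
    rw [hsub, Matrix.det_mul]
  have hginvpos : 0 < ((g⁻¹).submatrix f f).det :=
    (posDef_submatrix_castLE h hg.inv).det_pos
  have hbtri : (b.submatrix f f).BlockTriangular id := by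
    intro i j hij
    exact hb (by exact_mod_cast hij)
  have hbpos : 0 < (b.submatrix f f).det := by
    rw [Matrix.det_of_upperTriangular hbtri]
    exact Finset.prod_pos fun i _ => hbd (f i)
  have htr : ((kᵀ).submatrix f f).det = (k.submatrix f f).det := by
    rw [← Matrix.transpose_submatrix, Matrix.det_transpose]
  unfold leadMinor
  rw [← hf, ← htr, hdkt]
  exact mul_pos hginvpos hbpos
end

section
/- If k is an n×n real orthogonal matrix all of whose leading principal minors are positive, then there exists an upper triangular real matrix b with positive diagonal entries such that b⁻¹ k is symmetric and positive definite. Consequently k lies in the image of the set of positive definite symmetric matrices under the Iwasawa projection to the orthogonal group. -/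
open Matrix

/-- Diagonal entries of a product of two upper triangular matrices multiply. -/
lemma diag_mul_upper {n : ℕ} {M N : Matrix (Fin n) (Fin n) ℝ}
    (hM : M.BlockTriangular id) (hN : N.BlockTriangular id) (i : Fin n) :
    (M * N) i i = M i i * N i i := by
  rw [Matrix.mul_apply]
  apply Finset.sum_eq_single i
  · intro m _ hmi
    rcases lt_or_gt_of_ne hmi with hlt | hgt
    · have : M i m = 0 := hM (show id m < id i from hlt)
      simp [this]
    · have : N m i = 0 := hN (show id i < id m from hgt)
      simp [this]
  · intro h; exact absurd (Finset.mem_univ i) h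

/-- Leading block of a product where the left factor is lower triangular. -/
lemma submatrix_mul_lower {n r : ℕ} (h : r ≤ n) (L U : Matrix (Fin n) (Fin n) ℝ)
    (hL : ∀ i j : Fin n, (i : ℕ) < (j : ℕ) → L i j = 0) :
    (L * U).submatrix (Fin.castLE h) (Fin.castLE h)
      = L.submatrix (Fin.castLE h) (Fin.castLE h) * U.submatrix (Fin.castLE h) (Fin.castLE h) := by
  ext i j
  simp only [Matrix.submatrix_apply, Matrix.mul_apply]
  have hsub : ((Finset.univ : Finset (Fin r)).image (Fin.castLE h)) ⊆ Finset.univ :=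
    Finset.subset_univ _
  rw [← Finset.sum_subset hsub]
  · rw [Finset.sum_image (fun x _ y _ hxy => Fin.castLE_injective h hxy)]
  · intro m _ hm
    have hrm : (r : ℕ) ≤ (m : ℕ) := by
      by_contra hlt
      push_neg at hlt
      exact hm (Finset.mem_image.2 ⟨⟨(m : ℕ), hlt⟩, Finset.mem_univ _, by ext; simp⟩)
    have : L (Fin.castLE h i) m = 0 := by
      apply hL
      simp only [Fin.coe_castLE]
      exact lt_of_lt_of_le i.isLt hrm
    simp [this]

/-- LU decomposition for matrices all of whose leading principal minors are nonzero. -/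
lemma lu_exists : ∀ (n : ℕ) (A : Matrix (Fin n) (Fin n) ℝ),
    (∀ r (h : r ≤ n), (A.submatrix (Fin.castLE h) (Fin.castLE h)).det ≠ 0) →
    ∃ L U : Matrix (Fin n) (Fin n) ℝ,
      (∀ i j : Fin n, (i : ℕ) < (j : ℕ) → L i j = 0) ∧ (∀ i, L i i = 1) ∧
      U.BlockTriangular id ∧ A = L * U := by
  intro n
  induction n with
  | zero =>
    intro A _
    refine ⟨1, 1, ?_, ?_, ?_, ?_⟩
    · intro i; exact i.elim0
    · intro i; exact i.elim0
    · intro i; exact i.elim0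
    · ext i; exact i.elim0
  | succ n ih =>
    intro A hA
    set A' : Matrix (Fin n) (Fin n) ℝ :=
      A.submatrix (Fin.castLE n.le_succ) (Fin.castLE n.le_succ) with hA'def
    have key : ∀ r (h : r ≤ n),
        A'.submatrix (Fin.castLE h) (Fin.castLE h)
          = A.submatrix (Fin.castLE (h.trans n.le_succ)) (Fin.castLE (h.trans n.le_succ)) := by
      intro r h
      rw [hA'def, Matrix.submatrix_submatrix]
      congr 1 <;> · funext x; exact Fin.ext rfl
    obtain ⟨L', U', hL't, hL'd, hU't, hfact⟩ := ih A' (by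
      intro r h
      rw [key r h]
      exact hA r (h.trans n.le_succ))
    have hdetA' : A'.det ≠ 0 := hA n n.le_succ
    have hdetL' : L'.det = 1 := by
      rw [← Matrix.det_transpose,
        Matrix.det_of_upperTriangular (by
          intro i j hij
          exact hL't j i hij)]
      simp [Matrix.transpose_apply, hL'd]
    have hdetU' : U'.det ≠ 0 := by
      intro h0
      apply hdetA'
      rw [hfact, Matrix.det_mul, hdetL', h0, one_mul]
    have hUL' : IsUnit L'.det := by rw [hdetL']; exact isUnit_one
    have hUU' : IsUnit U'.det := isUnit_iff_ne_zero.2 hdetU'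
    -- block data
    set c : Fin n → ℝ := fun i => A (Fin.castSucc i) (Fin.last n) with hc
    set r0 : Fin n → ℝ := fun j => A (Fin.last n) (Fin.castSucc j) with hr0
    set y : Fin n → ℝ := L'⁻¹ *ᵥ c with hy
    set x : Fin n → ℝ := r0 ᵥ* U'⁻¹ with hx
    set s : ℝ := A (Fin.last n) (Fin.last n) - x ⬝ᵥ y with hs
    set e : Fin n ⊕ Fin 1 ≃ Fin (n + 1) := finSumFinEquiv with he
    set xrow : Matrix (Fin 1) (Fin n) ℝ := Matrix.of fun _ j => x j with hxrow
    set ycol : Matrix (Fin n) (Fin 1) ℝ := Matrix.of fun i _ => y i with hycol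
    set s1 : Matrix (Fin 1) (Fin 1) ℝ := Matrix.of fun _ _ => s with hs1
    set L0 : Matrix (Fin n ⊕ Fin 1) (Fin n ⊕ Fin 1) ℝ :=
      Matrix.fromBlocks L' 0 xrow 1 with hL0
    set U0 : Matrix (Fin n ⊕ Fin 1) (Fin n ⊕ Fin 1) ℝ :=
      Matrix.fromBlocks U' ycol 0 s1 with hU0
    have hLy : L' *ᵥ y = c := by
      rw [hy, Matrix.mulVec_mulVec, Matrix.mul_nonsing_inv _ hUL', Matrix.one_mulVec]
    have hxU : x ᵥ* U' = r0 := by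
      rw [hx, Matrix.vecMul_vecMul, Matrix.nonsing_inv_mul _ hUU', Matrix.vecMul_one]
    have hblock : A.submatrix e e = L0 * U0 := by
      rw [hL0, hU0, Matrix.fromBlocks_multiply]
      ext i j
      cases i with
      | inl i =>
        cases j with
        | inl j =>
          simp only [Matrix.submatrix_apply, he, finSumFinEquiv_apply_left,
            Matrix.fromBlocks_apply₁₁]
          have : A (Fin.castAdd 1 i) (Fin.castAdd 1 j) = A' i j := rfl
          rw [this, hfact]
          simp [Matrix.mul_apply]
        | inr j =>
          simp only [Matrix.submatrix_apply, he, finSumFinEquiv_apply_left,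
            finSumFinEquiv_apply_right, Matrix.fromBlocks_apply₁₂]
          have h1 : (L' * ycol + (0 : Matrix (Fin n) (Fin 1) ℝ) * s1) i j = (L' *ᵥ y) i := by
            simp [Matrix.mul_apply, Matrix.mulVec, dotProduct, hycol]
          rw [h1, hLy]
          have : Fin.natAdd n j = Fin.last n := by
            ext
            simp [Fin.natAdd]
          rw [this]
          rfl
      | inr i =>
        cases j with
        | inl j =>
          simp only [Matrix.submatrix_apply, he, finSumFinEquiv_apply_left,
            finSumFinEquiv_apply_right, Matrix.fromBlocks_apply₂₁]
          have h1 : (xrow * U' + (1 : Matrix (Fin 1) (Fin 1) ℝ) * (0 : Matrix (Fin 1) (Fin n) ℝ)) i j = (x ᵥ* U') j := by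
            simp [Matrix.mul_apply, Matrix.vecMul, dotProduct, hxrow]
          rw [h1, hxU]
          have : Fin.natAdd n i = Fin.last n := by
            ext
            simp [Fin.natAdd]
          rw [this]
          rfl
        | inr j =>
          simp only [Matrix.submatrix_apply, he, finSumFinEquiv_apply_right,
            Matrix.fromBlocks_apply₂₂]
          have h1 : (xrow * ycol + (1 : Matrix (Fin 1) (Fin 1) ℝ) * s1) i j = x ⬝ᵥ y + s := by
            simp [Matrix.mul_apply, dotProduct, hxrow, hycol, hs1,
              Matrix.one_apply]
          rw [h1]
          have h2 : Fin.natAdd n i = Fin.last n := by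
            ext
            simp [Fin.natAdd]
          have h3 : Fin.natAdd n j = Fin.last n := by
            ext
            simp [Fin.natAdd]
          rw [h2, h3, hs]
          ring
    refine ⟨L0.submatrix e.symm e.symm, U0.submatrix e.symm e.symm, ?_, ?_, ?_, ?_⟩
    · -- lower triangular
      intro i j hij
      have hi : i = e (e.symm i) := (e.apply_symm_apply i).symm
      have hj : j = e (e.symm j) := (e.apply_symm_apply j).symm
      simp only [Matrix.submatrix_apply]
      rcases ha : e.symm i with a | a <;> rcases hb : e.symm j with b | b
      · have hia : (i : ℕ) = (a : ℕ) := by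
          rw [hi, ha]; simp [he]
        have hjb : (j : ℕ) = (b : ℕ) := by
          rw [hj, hb]; simp [he]
        simp only [hL0, Matrix.fromBlocks_apply₁₁]
        exact hL't a b (by omega)
      · simp [hL0]
      · -- i in last row, j among first n: (i:ℕ) = n, (j:ℕ) = b < n, contra with i < j
        exfalso
        have hia : (i : ℕ) = n + (a : ℕ) := by
          rw [hi, ha]; simp [he]
        have hjb : (j : ℕ) = (b : ℕ) := by
          rw [hj, hb]; simp [he]
        have := b.isLt
        omega
      · exfalso
        have hia : (i : ℕ) = n + (a : ℕ) := by
          rw [hi, ha]; simp [he]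
        have hjb : (j : ℕ) = n + (b : ℕ) := by
          rw [hj, hb]; simp [he]
        have := a.isLt
        have := b.isLt
        omega
    · -- unit diagonal
      intro i
      simp only [Matrix.submatrix_apply]
      rcases ha : e.symm i with a | a
      · simp [hL0, hL'd]
      · simp [hL0, Matrix.one_apply]
    · -- upper triangular
      intro i j hij
      have hi : i = e (e.symm i) := (e.apply_symm_apply i).symm
      have hj : j = e (e.symm j) := (e.apply_symm_apply j).symm
      simp only [Matrix.submatrix_apply]
      rcases ha : e.symm i with a | a <;> rcases hb : e.symm j with b | b
      · have hia : (i : ℕ) = (a : ℕ) := by rw [hi, ha]; simp [he]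
        have hjb : (j : ℕ) = (b : ℕ) := by rw [hj, hb]; simp [he]
        simp only [hU0, Matrix.fromBlocks_apply₁₁]
        apply hU't
        show (b : ℕ) < (a : ℕ)
        have : (j : ℕ) < (i : ℕ) := hij
        omega
      · exfalso
        have hia : (i : ℕ) = (a : ℕ) := by rw [hi, ha]; simp [he]
        have hjb : (j : ℕ) = n + (b : ℕ) := by rw [hj, hb]; simp [he]
        have : (j : ℕ) < (i : ℕ) := hij
        have := a.isLt
        omega
      · simp [hU0]
      · exfalso
        have hia : (i : ℕ) = n + (a : ℕ) := by rw [hi, ha]; simp [he]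
        have hjb : (j : ℕ) = n + (b : ℕ) := by rw [hj, hb]; simp [he]
        have : (j : ℕ) < (i : ℕ) := hij
        have := a.isLt
        have := b.isLt
        omega
    · -- factorization
      rw [Matrix.submatrix_mul_equiv L0 U0 e.symm e.symm e.symm, ← hblock,
        Matrix.submatrix_submatrix]
      simp

theorem stmt6 {n : ℕ} (k : Matrix (Fin n) (Fin n) ℝ)
    (hk : kᵀ * k = 1)
    (hpos : ∀ r : ℕ, 1 ≤ r → ∀ h : r ≤ n, 0 < leadMinor k r h) :
    ∃ b : Matrix (Fin n) (Fin n) ℝ,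
      b.BlockTriangular id ∧ (∀ i, 0 < b i i) ∧ (b⁻¹ * k).PosDef ∧
      ∃ g : Matrix (Fin n) (Fin n) ℝ, g.PosDef ∧ k = b * g := by
  obtain ⟨L, U, hLt, hLd, hUt, hfact⟩ := lu_exists n k (by
    intro r h
    rcases Nat.eq_zero_or_pos r with rfl | hr
    · have : (k.submatrix (Fin.castLE (Nat.zero_le n)) (Fin.castLE (Nat.zero_le n))).det = 1 :=
        Matrix.det_fin_zero
      rw [this]; exact one_ne_zero
    · exact ne_of_gt (hpos r hr h))
  -- minors of k equal products of diagonal entries of U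
  have hminor : ∀ r (h : r ≤ n),
      leadMinor k r h = ∏ i : Fin r, U (Fin.castLE h i) (Fin.castLE h i) := by
    intro r h
    unfold leadMinor
    rw [hfact, submatrix_mul_lower h L U hLt, Matrix.det_mul]
    have h1 : (L.submatrix (Fin.castLE h) (Fin.castLE h)).det = 1 := by
      rw [← Matrix.det_transpose,
        Matrix.det_of_upperTriangular (by
          intro i j hij
          simp only [Matrix.transpose_apply, Matrix.submatrix_apply]
          exact hLt _ _ (show ((Fin.castLE h j : Fin n) : ℕ) < (Fin.castLE h i : Fin n) from hij))]
      simp [Matrix.transpose_apply, hLd]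
    have h2 : (U.submatrix (Fin.castLE h) (Fin.castLE h)).det
        = ∏ i : Fin r, U (Fin.castLE h i) (Fin.castLE h i) := by
      rw [Matrix.det_of_upperTriangular (by
        intro i j hij
        simp only [Matrix.submatrix_apply]
        exact hUt (show ((Fin.castLE h j : Fin n)) < (Fin.castLE h i : Fin n) from hij))]
      rfl
    rw [h1, h2, one_mul]
  have hprod : ∀ r (h : r ≤ n), 0 < ∏ i : Fin r, U (Fin.castLE h i) (Fin.castLE h i) := by
    intro r h
    rcases Nat.eq_zero_or_pos r with rfl | hr
    · simp
    · rw [← hminor r h]; exact hpos r hr h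
  have hUd : ∀ i : Fin n, 0 < U i i := by
    intro i
    have h1 : (i : ℕ) + 1 ≤ n := i.isLt
    have h2 : (i : ℕ) ≤ n := le_of_lt i.isLt
    have hp1 := hprod ((i : ℕ) + 1) h1
    rw [Fin.prod_univ_castSucc] at hp1
    have hlast : Fin.castLE h1 (Fin.last (i : ℕ)) = i := by ext; rfl
    have hrest : (∏ m : Fin (i : ℕ), U (Fin.castLE h1 (Fin.castSucc m))
          (Fin.castLE h1 (Fin.castSucc m)))
        = ∏ m : Fin (i : ℕ), U (Fin.castLE h2 m) (Fin.castLE h2 m) := by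
      apply Finset.prod_congr rfl
      intro m _
      congr 1 <;> exact Fin.ext rfl
    rw [hlast, hrest] at hp1
    have hp2 := hprod (i : ℕ) h2
    nlinarith
  -- determinants
  have hdetL : L.det = 1 := by
    rw [← Matrix.det_transpose,
      Matrix.det_of_upperTriangular (by
        intro i j hij
        exact hLt j i hij)]
    simp [Matrix.transpose_apply, hLd]
  have hdetLT : (Lᵀ).det = 1 := by rw [Matrix.det_transpose, hdetL]
  have hULT : IsUnit (Lᵀ).det := by rw [hdetLT]; exact isUnit_one
  have hdetU : 0 < U.det := by
    rw [Matrix.det_of_upperTriangular hUt]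
    exact Finset.prod_pos fun i _ => hUd i
  have hUU : IsUnit U.det := isUnit_iff_ne_zero.2 (ne_of_gt hdetU)
  have hUUT : IsUnit (Uᵀ).det := by rw [Matrix.det_transpose]; exact hUU
  -- b and g
  set b : Matrix (Fin n) (Fin n) ℝ := (Lᵀ)⁻¹ * U with hb
  have hLTt : (Lᵀ).BlockTriangular id := by
    intro i j hij
    exact hLt j i hij
  haveI : Invertible (Lᵀ) := (Lᵀ).invertibleOfIsUnitDet hULT
  have hLTinvt : ((Lᵀ)⁻¹).BlockTriangular id :=
    Matrix.blockTriangular_inv_of_blockTriangular hLTt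
  have hbt : b.BlockTriangular id := hLTinvt.mul hUt
  have hLTinvd : ∀ i, (Lᵀ)⁻¹ i i = 1 := by
    intro i
    have h1 : (Lᵀ * (Lᵀ)⁻¹) i i = 1 := by
      rw [Matrix.mul_nonsing_inv _ hULT]; simp [Matrix.one_apply]
    rw [diag_mul_upper hLTt hLTinvt] at h1
    have h2 : Lᵀ i i = 1 := hLd i
    rw [h2, one_mul] at h1
    exact h1
  have hbd : ∀ i, 0 < b i i := by
    intro i
    rw [hb, diag_mul_upper hLTinvt hUt, hLTinvd, one_mul]
    exact hUd i
  have hdetb : IsUnit b.det := by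
    rw [hb, Matrix.det_mul, Matrix.det_nonsing_inv, hdetLT]
    simp only [Ring.inverse_one, one_mul]
    exact hUU
  -- orthogonality identity
  have horto : Uᵀ * (Lᵀ * L) * U = 1 := by
    have h1 := hk
    rw [hfact, Matrix.transpose_mul] at h1
    calc Uᵀ * (Lᵀ * L) * U = Uᵀ * Lᵀ * (L * U) := by
          rw [Matrix.mul_assoc, Matrix.mul_assoc, Matrix.mul_assoc]
      _ = 1 := h1
  have hLL : Lᵀ * L = (Uᵀ)⁻¹ * U⁻¹ := by
    have h1 : Uᵀ * ((Lᵀ * L) * U) = 1 := by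
      rw [← Matrix.mul_assoc]; exact horto
    have h2 : (Lᵀ * L) * U = (Uᵀ)⁻¹ := by
      calc (Lᵀ * L) * U = (Uᵀ)⁻¹ * (Uᵀ * ((Lᵀ * L) * U)) :=
            (Matrix.nonsing_inv_mul_cancel_left _ _ hUUT).symm
        _ = (Uᵀ)⁻¹ := by rw [h1, mul_one]
    calc Lᵀ * L = (Lᵀ * L) * U * U⁻¹ := (Matrix.mul_nonsing_inv_cancel_right _ _ hUU).symm
      _ = (Uᵀ)⁻¹ * U⁻¹ := by rw [h2]
  have hbinv : b⁻¹ = U⁻¹ * Lᵀ := by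
    rw [hb, Matrix.mul_inv_rev, Matrix.nonsing_inv_nonsing_inv _ hULT]
  have hkey : b⁻¹ * k = (Uᵀ * U)⁻¹ := by
    rw [hbinv, hfact]
    calc U⁻¹ * Lᵀ * (L * U) = U⁻¹ * ((Lᵀ * L) * U) := by
          rw [Matrix.mul_assoc, Matrix.mul_assoc]
      _ = U⁻¹ * ((Uᵀ)⁻¹ * U⁻¹ * U) := by rw [hLL]
      _ = U⁻¹ * (Uᵀ)⁻¹ := by
          rw [Matrix.mul_assoc, Matrix.nonsing_inv_mul _ hUU, mul_one]
      _ = (Uᵀ * U)⁻¹ := (Matrix.mul_inv_rev _ _).symm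
  -- positive definiteness
  have hUtU : (Uᵀ * U).PosDef := by
    rw [Matrix.posDef_iff_dotProduct_mulVec]
    constructor
    · have h := Matrix.isHermitian_conjTranspose_mul_self U
      rwa [Matrix.conjTranspose_eq_transpose_of_trivial] at h
    · intro x hx
      have hUx : U *ᵥ x ≠ 0 := by
        intro h0
        apply hx
        have h1 : U⁻¹ *ᵥ (U *ᵥ x) = x := by
          rw [Matrix.mulVec_mulVec, Matrix.nonsing_inv_mul _ hUU, Matrix.one_mulVec]
        rw [h0, Matrix.mulVec_zero] at h1
        exact h1.symm
      have h1 : star x ⬝ᵥ ((Uᵀ * U) *ᵥ x) = (U *ᵥ x) ⬝ᵥ (U *ᵥ x) := by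
        rw [star_trivial, ← Matrix.mulVec_mulVec, Matrix.dotProduct_mulVec,
          Matrix.vecMul_transpose]
      rw [h1]
      have h2 : 0 ≤ (U *ᵥ x) ⬝ᵥ (U *ᵥ x) := by
        unfold dotProduct
        exact Finset.sum_nonneg fun i _ => mul_self_nonneg _
      have h3 : (U *ᵥ x) ⬝ᵥ (U *ᵥ x) ≠ 0 :=
        fun h0 => hUx (dotProduct_self_eq_zero.mp h0)
      exact lt_of_le_of_ne h2 (Ne.symm h3)
  have hg : ((Uᵀ * U)⁻¹).PosDef := hUtU.inv
  refine ⟨b, hbt, hbd, by rw [hkey]; exact hg, b⁻¹ * k, by rw [hkey]; exact hg, ?_⟩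
  rw [Matrix.mul_nonsing_inv_cancel_left _ _ hdetb]
end

section
/- Let κ denote the Iwasawa projection from GL_n(ℝ) to O(n). Then the image under κ of the set of positive definite symmetric matrices equals the set of orthogonal matrices all of whose trailing principal minors (determinants of the bottom-right r×r submatrices) are positive. -/
open Matrix

/-- The determinant of the bottom-right `r × r` submatrix of `B`. -/
def trailMinor {n : ℕ} (B : Matrix (Fin n) (Fin n) ℝ) (r : ℕ) (h : r ≤ n) : ℝ :=
  (B.submatrix (fun i : Fin r => (⟨n - r + i, by omega⟩ : Fin n))
    (fun i : Fin r => (⟨n - r + i, by omega⟩ : Fin n))).det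

namespace Stmt8Aux

variable {n : ℕ}

/-- trailing embedding -/
def emb (n r : ℕ) (h : r ≤ n) : Fin r → Fin n := fun i => ⟨n - r + i, by omega⟩

lemma emb_inj (n r : ℕ) (h : r ≤ n) : Function.Injective (emb n r h) := by
  intro a b hab
  have := congrArg Fin.val hab
  simp only [emb] at this
  exact Fin.ext (by omega)

lemma trailMinor_eq (B : Matrix (Fin n) (Fin n) ℝ) (r : ℕ) (h : r ≤ n) :
    trailMinor B r h = (B.submatrix (emb n r h) (emb n r h)).det := rfl

lemma submatrix_mul_of_triangular (b k : Matrix (Fin n) (Fin n) ℝ) (hb : b.BlockTriangular id)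
    (r : ℕ) (h : r ≤ n) :
    (b * k).submatrix (emb n r h) (emb n r h)
      = b.submatrix (emb n r h) (emb n r h) * k.submatrix (emb n r h) (emb n r h) := by
  ext i j
  rw [submatrix_apply, mul_apply, mul_apply]
  have hzero : ∀ l ∈ (Finset.univ : Finset (Fin n)),
      l ∉ (Finset.univ : Finset (Fin r)).map ⟨emb n r h, emb_inj n r h⟩ →
      b (emb n r h i) l * k l (emb n r h j) = 0 := by
    intro l _ hl
    have hlv : (l : ℕ) < n - r := by
      by_contra hc
      push_neg at hc
      refine hl (Finset.mem_map.mpr ⟨⟨(l : ℕ) - (n - r), by omega⟩, Finset.mem_univ _, ?_⟩)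
      exact Fin.ext (by simp [emb]; omega)
    have hlt : id l < id (emb n r h i) := by
      simp only [id]
      rw [Fin.lt_def]
      simp only [emb]
      omega
    rw [hb hlt, zero_mul]
  rw [← Finset.sum_subset (Finset.subset_univ _) hzero, Finset.sum_map]
  rfl

lemma blockTriangular_submatrix {b : Matrix (Fin n) (Fin n) ℝ} (hb : b.BlockTriangular id)
    (r : ℕ) (h : r ≤ n) : (b.submatrix (emb n r h) (emb n r h)).BlockTriangular id := by
  intro i j hij
  refine hb ?_
  simp only [id] at hij ⊢
  rw [Fin.lt_def] at hij ⊢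
  simp only [emb]
  omega

lemma det_submatrix_lower {L : Matrix (Fin n) (Fin n) ℝ} (hL : ∀ i j : Fin n, i < j → L i j = 0)
    (r : ℕ) (h : r ≤ n) :
    (L.submatrix (emb n r h) (emb n r h)).det = ∏ m : Fin r, L (emb n r h m) (emb n r h m) := by
  refine det_of_lowerTriangular _ ?_
  intro i j hij
  refine hL _ _ ?_
  have hij' : (i : Fin r) < j := hij
  rw [Fin.lt_def] at hij' ⊢
  simp only [emb]
  omega

lemma posDef_submatrix {M : Matrix (Fin n) (Fin n) ℝ} (hM : M.PosDef)
    {r : ℕ} (e : Fin r → Fin n) (he : Function.Injective e) :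
    (M.submatrix e e).PosDef := by
  classical
  set E : Matrix (Fin n) (Fin r) ℝ := (1 : Matrix (Fin n) (Fin n) ℝ).submatrix id e with hE
  have hME : ∀ l j, (M * E) l j = M l (e j) := by
    intro l j
    simp [hE, mul_apply, one_apply]
  have hsub : M.submatrix e e = Eᵀ * M * E := by
    rw [Matrix.mul_assoc]
    ext i j
    rw [mul_apply]
    simp only [transpose_apply, hE, submatrix_apply, one_apply, id_eq, ite_mul, one_mul, zero_mul]
    rw [Finset.sum_ite_eq' Finset.univ (e i) fun l => (M * E) l j]
    simp [hME]
  rw [posDef_iff_dotProduct_mulVec]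
  constructor
  · exact hM.1.submatrix e
  · intro x hx
    have hy : E *ᵥ x ≠ 0 := by
      obtain ⟨m, hm⟩ := Function.ne_iff.mp hx
      intro h0
      have hv : (E *ᵥ x) (e m) = x m := by
        simp [hE, mulVec, dotProduct, one_apply, he.eq_iff]
      rw [h0] at hv
      exact hm (by simpa using hv.symm)
    have hpos := hM.dotProduct_mulVec_pos hy
    rw [hsub]
    have : star x ⬝ᵥ ((Eᵀ * M * E) *ᵥ x) = star (E *ᵥ x) ⬝ᵥ (M *ᵥ (E *ᵥ x)) := by
      rw [← mulVec_mulVec, ← mulVec_mulVec]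
      rw [dotProduct_mulVec, star_trivial, star_trivial, vecMul_transpose, dotProduct_mulVec]
    rw [this]
    exact hpos

lemma exists_N (k : Matrix (Fin n) (Fin n) ℝ)
    (hpos : ∀ (r : ℕ) (h : r ≤ n), 0 < (k.submatrix (emb n r h) (emb n r h)).det) :
    ∃ N : Matrix (Fin n) (Fin n) ℝ, N.BlockTriangular id ∧ (∀ i, N i i = 1) ∧
      ∀ i j : Fin n, i < j → (N * k) i j = 0 := by
  classical
  have hs : ∀ i : Fin n, n - 1 - (i : ℕ) ≤ n := fun i => by omega
  set s : Fin n → ℕ := fun i => n - 1 - (i : ℕ) with hsdef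
  set B : ∀ i : Fin n, Matrix (Fin (s i)) (Fin (s i)) ℝ :=
    fun i => k.submatrix (emb n (s i) (hs i)) (emb n (s i) (hs i)) with hBdef
  have hdetB : ∀ i, IsUnit (B i)ᵀ.det := by
    intro i
    rw [det_transpose]
    exact (hpos (s i) (hs i)).ne'.isUnit
  set cvec : ∀ i : Fin n, Fin (s i) → ℝ :=
    fun i => ((B i)ᵀ)⁻¹ *ᵥ (fun m => - k i (emb n (s i) (hs i) m)) with hcdef
  set N : Matrix (Fin n) (Fin n) ℝ := Matrix.of fun i l =>
    if l = i then (1:ℝ) else if hlt : (i : ℕ) + 1 ≤ (l : ℕ) then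
      cvec i ⟨(l : ℕ) - ((i : ℕ) + 1), by
        have := l.isLt; have := i.isLt; simp only [hsdef]; omega⟩ else 0 with hNdef
  have hNlow : N.BlockTriangular id := by
    intro i j hij
    have hij' : (j : ℕ) < (i : ℕ) := hij
    simp only [hNdef, Matrix.of_apply]
    rw [if_neg (by intro hji; rw [hji] at hij'; omega), dif_neg (by omega)]
  have hNdiag : ∀ i, N i i = 1 := fun i => by simp [hNdef]
  refine ⟨N, hNlow, hNdiag, ?_⟩
  intro i j hij
  have hij' : (i : ℕ) < (j : ℕ) := hij
  have hin : (i : ℕ) < n := i.isLt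
  have hsi : s i = n - 1 - (i : ℕ) := by rw [hsdef]
  have hnr : n - s i = (i : ℕ) + 1 := by omega
  have hjm : (j : ℕ) - ((i : ℕ) + 1) < s i := by have := j.isLt; omega
  set m' : Fin (s i) := ⟨(j : ℕ) - ((i : ℕ) + 1), hjm⟩ with hm'def
  have hejm : emb n (s i) (hs i) m' = j := by
    apply Fin.ext
    simp only [emb, hm'def, Fin.val_mk]
    omega
  have hembval : ∀ m : Fin (s i), ((emb n (s i) (hs i) m : Fin n) : ℕ) = (i : ℕ) + 1 + (m : ℕ) := by
    intro m
    simp only [emb]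
    omega
  have hNe : ∀ m : Fin (s i), N i (emb n (s i) (hs i) m) = cvec i m := by
    intro m
    have h1 : emb n (s i) (hs i) m ≠ i := by
      intro hc
      have := congrArg Fin.val hc
      rw [hembval m] at this
      omega
    simp only [hNdef, Matrix.of_apply]
    rw [if_neg h1, dif_pos (by rw [hembval m]; omega)]
    congr 1
    apply Fin.ext
    simp only [hembval m]
    omega
  rw [mul_apply]
  have hzero : ∀ l ∈ (Finset.univ : Finset (Fin n)),
      l ∉ insert i ((Finset.univ : Finset (Fin (s i))).map
        ⟨emb n (s i) (hs i), emb_inj n (s i) (hs i)⟩) →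
      N i l * k l j = 0 := by
    intro l _ hl
    simp only [Finset.mem_insert, Finset.mem_map, Finset.mem_univ, true_and,
      Function.Embedding.coeFn_mk, not_or, not_exists] at hl
    obtain ⟨hl1, hl2⟩ := hl
    have hlv : (l : ℕ) ≤ (i : ℕ) := by
      by_contra hc
      push_neg at hc
      exact hl2 ⟨(l : ℕ) - ((i : ℕ) + 1), by have := l.isLt; omega⟩
        (Fin.ext (by rw [hembval]; simp only [Fin.val_mk]; have := l.isLt; omega))
    have hlv' : (l : ℕ) < (i : ℕ) := by
      rcases lt_or_eq_of_le hlv with h | h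
      · exact h
      · exact absurd (Fin.ext h) hl1
    simp only [hNdef, Matrix.of_apply]
    rw [if_neg (by intro hc; rw [hc] at hlv'; omega), dif_neg (by omega), zero_mul]
  rw [← Finset.sum_subset (Finset.subset_univ _) hzero]
  rw [Finset.sum_insert (by
    simp only [Finset.mem_map, Finset.mem_univ, true_and, Function.Embedding.coeFn_mk,
      not_exists]
    intro m hc
    have := congrArg Fin.val hc
    rw [hembval m] at this
    omega)]
  rw [Finset.sum_map]
  simp only [Function.Embedding.coeFn_mk]
  rw [hNdiag i]
  have hsum : ∑ m : Fin (s i), N i (emb n (s i) (hs i) m) * k (emb n (s i) (hs i) m) j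
      = ((B i)ᵀ *ᵥ cvec i) m' := by
    rw [mulVec]
    rw [show (fun m => N i (emb n (s i) (hs i) m) * k (emb n (s i) (hs i) m) j) = fun m =>
      cvec i m * (B i) m m' from funext fun m => by
        rw [hNe m, hBdef]
        simp only [submatrix_apply, hejm]]
    simp [dotProduct, transpose_apply, mul_comm]
  rw [hsum, hcdef]
  rw [mulVec_mulVec, Matrix.mul_nonsing_inv _ (hdetB i), one_mulVec]
  simp [hejm]

end Stmt8Aux

open Stmt8Aux in
/-- The image of the set of positive definite symmetric matrices under the
Iwasawa projection `g = b * k ↦ k` equals the set of orthogonal matrices with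
all trailing principal minors positive. -/
theorem stmt8 {n : ℕ} :
    {k : Matrix (Fin n) (Fin n) ℝ | kᵀ * k = 1 ∧
        ∃ g b : Matrix (Fin n) (Fin n) ℝ, g.PosDef ∧
          b.BlockTriangular id ∧ (∀ i, 0 < b i i) ∧ g = b * k} =
    {k : Matrix (Fin n) (Fin n) ℝ | kᵀ * k = 1 ∧
        ∀ r : ℕ, 1 ≤ r → ∀ h : r ≤ n, 0 < trailMinor k r h} := by
  ext k
  simp only [Set.mem_setOf_eq]
  constructor
  · rintro ⟨hk, g, b, hg, hb, hbd, heq⟩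
    refine ⟨hk, ?_⟩
    intro r hr h
    rw [trailMinor_eq]
    have hgd : 0 < (g.submatrix (emb n r h) (emb n r h)).det :=
      (posDef_submatrix hg _ (emb_inj n r h)).det_pos
    have hmul : (g.submatrix (emb n r h) (emb n r h)).det
        = (b.submatrix (emb n r h) (emb n r h)).det * (k.submatrix (emb n r h) (emb n r h)).det := by
      rw [heq, submatrix_mul_of_triangular b k hb r h, det_mul]
    have hbdet : 0 < (b.submatrix (emb n r h) (emb n r h)).det := by
      rw [det_of_upperTriangular (blockTriangular_submatrix hb r h)]
      exact Finset.prod_pos fun m _ => hbd _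
    rw [hmul] at hgd
    nlinarith
  · rintro ⟨hk, hmin⟩
    refine ⟨hk, ?_⟩
    have hpos : ∀ (r : ℕ) (h : r ≤ n), 0 < (k.submatrix (emb n r h) (emb n r h)).det := by
      intro r h
      match r with
      | 0 => simp [Matrix.det_fin_zero]
      | (r+1) => exact hmin (r+1) (by omega) h
    obtain ⟨N, hNtri, hNdiag, hNk⟩ := exists_N k hpos
    set L : Matrix (Fin n) (Fin n) ℝ := N * k with hLdef
    have hLlow : ∀ i j : Fin n, i < j → L i j = 0 := fun i j hij => hNk i j hij
    -- trailing minors of L are positive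
    have hLpos : ∀ (r : ℕ) (h : r ≤ n), 0 < ∏ m : Fin r, L (emb n r h m) (emb n r h m) := by
      intro r h
      rw [← det_submatrix_lower hLlow r h, hLdef, submatrix_mul_of_triangular N k hNtri r h,
        det_mul, det_of_upperTriangular (blockTriangular_submatrix hNtri r h)]
      have h1 : ∏ m : Fin r, N.submatrix (emb n r h) (emb n r h) m m = 1 := by
        simp [submatrix_apply, hNdiag]
      rw [h1, one_mul]
      exact hpos r h
    have hLdiag : ∀ i, 0 < L i i := by
      intro i
      have hin : (i : ℕ) < n := i.isLt
      obtain ⟨t, ht⟩ : ∃ t, n - (i : ℕ) = t + 1 := ⟨n - (i : ℕ) - 1, by omega⟩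
      have h1 : t + 1 ≤ n := by omega
      have h0 : t ≤ n := by omega
      have hsplit : ∏ m : Fin (t+1), L (emb n (t+1) h1 m) (emb n (t+1) h1 m)
          = L i i * ∏ m : Fin t, L (emb n t h0 m) (emb n t h0 m) := by
        rw [Fin.prod_univ_succ]
        congr 1
        · congr 1 <;> exact Fin.ext (by simp [emb]; omega)
        · refine Finset.prod_congr rfl fun m _ => ?_
          congr 1 <;> exact Fin.ext (by simp [emb]; omega)
      have hp1 := hLpos (t+1) h1
      have hp0 := hLpos t h0
      rw [hsplit] at hp1
      nlinarith
    -- the witnesses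
    refine ⟨Lᵀ * L, Lᵀ * N, ?_, ?_, ?_, ?_⟩
    · -- PosDef
      rw [posDef_iff_dotProduct_mulVec]
      constructor
      · have := isHermitian_conjTranspose_mul_self L
        rwa [conjTranspose_eq_transpose_of_trivial] at this
      · intro x hx
        have hdetL : L.det ≠ 0 := by
          rw [det_of_lowerTriangular L (fun i j hij => hLlow i j hij)]
          exact (Finset.prod_pos fun i _ => hLdiag i).ne'
        have hLx : L *ᵥ x ≠ 0 := by
          intro h0
          exact hx (Matrix.eq_zero_of_mulVec_eq_zero hdetL h0)
        have : star x ⬝ᵥ ((Lᵀ * L) *ᵥ x) = star (L *ᵥ x) ⬝ᵥ (L *ᵥ x) := by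
          rw [← mulVec_mulVec, dotProduct_mulVec, star_trivial, star_trivial, vecMul_transpose]
        rw [this]
        exact dotProduct_star_self_pos_iff.mpr hLx
    · -- b upper triangular
      intro i j hij
      have hij' : (j : Fin n) < i := hij
      rw [mul_apply]
      refine Finset.sum_eq_zero fun l _ => ?_
      rcases lt_or_ge l i with hl | hl
      · rw [transpose_apply, hLlow l i hl, zero_mul]
      · have : j < l := lt_of_lt_of_le hij' hl
        rw [hNtri this, mul_zero]
    · -- positive diagonal
      intro i
      rw [mul_apply]
      rw [Finset.sum_eq_single i (fun l _ hl => ?_) (by simp)]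
      · rw [transpose_apply, hNdiag i, mul_one]
        exact hLdiag i
      · rcases lt_or_ge l i with h | h
        · rw [transpose_apply, hLlow l i h, zero_mul]
        · have : i < l := lt_of_le_of_ne h (Ne.symm hl)
          rw [hNtri this, mul_zero]
    · rw [Matrix.mul_assoc, ← hLdef]
end

section
/- For an orthogonal n×n real matrix k, all leading principal minors of k are positive if and only if all trailing principal minors of k are positive. -/
open Matrix

lemma key_aux {n : ℕ} (k : Matrix (Fin n) (Fin n) ℝ) (hk : kᵀ * k = 1)
    (r s : ℕ) (hrs : r + s = n) :
    trailMinor k s (by omega) = k.det * leadMinor k r (by omega) := by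
  have hk' : k * kᵀ = 1 := mul_eq_one_comm.mp hk
  let e : Fin r ⊕ Fin s ≃ Fin n := finSumFinEquiv.trans (finCongr hrs)
  set A := k.submatrix (e ∘ Sum.inl) (e ∘ Sum.inl) with hA
  set B := k.submatrix (e ∘ Sum.inl) (e ∘ Sum.inr) with hB
  set C := k.submatrix (e ∘ Sum.inr) (e ∘ Sum.inl) with hC
  set D := k.submatrix (e ∘ Sum.inr) (e ∘ Sum.inr) with hD
  have hblock : k.submatrix e e = fromBlocks A B C D := by
    ext i j; cases i <;> cases j <;> rfl
  have hKKt : fromBlocks A B C D * (fromBlocks A B C D)ᵀ = 1 := by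
    rw [← hblock, transpose_submatrix, submatrix_mul_equiv, hk', submatrix_one_equiv]
  rw [fromBlocks_transpose, fromBlocks_multiply] at hKKt
  have h11 : A * Aᵀ + B * Bᵀ = 1 := by
    ext i j
    have := congrFun (congrFun hKKt (Sum.inl i)) (Sum.inl j)
    simpa [Matrix.one_apply] using this
  have h21 : C * Aᵀ + D * Bᵀ = 0 := by
    ext i j
    have := congrFun (congrFun hKKt (Sum.inr i)) (Sum.inl j)
    simpa [Matrix.one_apply] using this
  have hmul : fromBlocks A B C D * fromBlocks Aᵀ 0 Bᵀ 1 = fromBlocks 1 B 0 D := by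
    rw [fromBlocks_multiply]
    simp [h11, h21]
  have hdet := congrArg Matrix.det hmul
  rw [Matrix.det_mul, Matrix.det_fromBlocks_zero₁₂, Matrix.det_fromBlocks_zero₂₁,
    ← hblock, Matrix.det_submatrix_equiv_self, Matrix.det_transpose,
    Matrix.det_one, Matrix.det_one, mul_one, one_mul] at hdet
  have hlead : leadMinor k r (by omega) = A.det := by
    rw [hA]; unfold leadMinor; rfl
  have hfun : ∀ i : Fin s, (⟨n - s + i, by omega⟩ : Fin n) = e (Sum.inr i) := by
    intro i; apply Fin.ext; simp [e]; omega
  have htrail : trailMinor k s (by omega) = D.det := by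
    rw [hD]; unfold trailMinor
    congr 1
    ext i j
    rw [Matrix.submatrix_apply, Matrix.submatrix_apply, Function.comp_apply,
      Function.comp_apply, hfun i, hfun j]
  rw [hlead, htrail, hdet]

theorem stmt9 {n : ℕ} (k : Matrix (Fin n) (Fin n) ℝ) (hk : kᵀ * k = 1) :
    (∀ r : ℕ, 1 ≤ r → ∀ h : r ≤ n, 0 < leadMinor k r h) ↔
    (∀ r : ℕ, 1 ≤ r → ∀ h : r ≤ n, 0 < trailMinor k r h) := by
  have key : ∀ r s : ℕ, ∀ hrs : r + s = n, ∀ hs : s ≤ n, ∀ hr : r ≤ n,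
      trailMinor k s hs = k.det * leadMinor k r hr := by
    intro r s hrs hs hr
    exact key_aux k hk r s hrs
  have hlead0 : ∀ m, ∀ hm : m ≤ n, m = 0 → leadMinor k m hm = 1 := by
    rintro m hm rfl; unfold leadMinor; exact Matrix.det_isEmpty
  have htrail0 : ∀ m, ∀ hm : m ≤ n, m = 0 → trailMinor k m hm = 1 := by
    rintro m hm rfl; unfold trailMinor; exact Matrix.det_isEmpty
  have hleadn : ∀ h : n ≤ n, leadMinor k n h = k.det := by
    intro h; unfold leadMinor
    have : k.submatrix (Fin.castLE h) (Fin.castLE h) = k := by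
      ext i j; rfl
    rw [this]
  have htrailn : ∀ h : n ≤ n, trailMinor k n h = k.det := by
    intro h; unfold trailMinor
    have : k.submatrix (fun i : Fin n => (⟨n - n + i, by omega⟩ : Fin n))
        (fun i : Fin n => (⟨n - n + i, by omega⟩ : Fin n)) = k := by
      ext i j
      simp only [Matrix.submatrix_apply]
      congr 1 <;> (apply Fin.ext; simp)
    rw [this]
  constructor
  · intro H s hs1 hs
    have hdet : 0 < k.det := by
      have := H n (le_trans hs1 hs) le_rfl
      rwa [hleadn le_rfl] at this
    rw [key (n - s) s (by omega) hs (by omega)]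
    rcases Nat.eq_zero_or_pos (n - s) with h0 | h0
    · rw [hlead0 _ _ h0]; simpa using hdet
    · exact mul_pos hdet (H (n - s) h0 (by omega))
  · intro H r hr1 hr
    have hdet : 0 < k.det := by
      have := H n (le_trans hr1 hr) le_rfl
      rwa [htrailn le_rfl] at this
    have hdet1 : k.det * k.det = 1 := by
      have := congrArg Matrix.det hk
      rwa [Matrix.det_mul, Matrix.det_transpose, Matrix.det_one] at this
    have hkey := key r (n - r) (by omega) (by omega) hr
    have heq : leadMinor k r hr = k.det * trailMinor k (n - r) (by omega) := by
      have h2 := congrArg (fun x => k.det * x) hkey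
      rw [← mul_assoc, hdet1, one_mul] at h2
      exact h2.symm
    rw [heq]
    rcases Nat.eq_zero_or_pos (n - r) with h0 | h0
    · rw [htrail0 _ _ h0]; simpa using hdet
    · exact mul_pos hdet (H (n - r) h0 (by omega))
end

section
/- Let g be a positive definite symmetric real n×n matrix with Iwasawa decomposition g = n a k, where n is upper triangular unipotent, a diagonal with positive entries, and k orthogonal. Then for every orthogonal matrix u and every 1 ≤ r ≤ n, the determinant of the top-left r×r submatrix of κ(u⁻¹ g u) is strictly positive, where κ denotes the Iwasawa projection to the orthogonal factor. -/
open Matrix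

lemma sum_fin_trunc {n r : ℕ} (h : r ≤ n) (f : Fin n → ℝ)
    (hf : ∀ p : Fin n, r ≤ p.val → f p = 0) :
    ∑ p, f p = ∑ q : Fin r, f (Fin.castLE h q) := by
  have hm := Finset.sum_map Finset.univ (Fin.castLEEmb h) f
  simp only [Fin.castLEEmb_apply] at hm
  rw [← hm]
  refine (Finset.sum_subset (Finset.subset_univ _) ?_).symm
  intro p _ hp
  refine hf p (Nat.le_of_not_lt fun hlt => hp ?_)
  simp only [Finset.mem_map, Fin.castLEEmb_apply]
  exact ⟨⟨p.val, hlt⟩, Finset.mem_univ _, by ext; simp⟩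

lemma submatrix_mul_blockTriangular {n r : ℕ} (h : r ≤ n)
    (A B : Matrix (Fin n) (Fin n) ℝ) (hB : B.BlockTriangular id) :
    (A * B).submatrix (Fin.castLE h) (Fin.castLE h) =
      A.submatrix (Fin.castLE h) (Fin.castLE h) * B.submatrix (Fin.castLE h) (Fin.castLE h) := by
  ext i j
  simp only [submatrix_apply, mul_apply]
  refine sum_fin_trunc h _ (fun p hp => ?_)
  have hz : B p (Fin.castLE h j) = 0 := hB (Fin.lt_def.mpr (lt_of_lt_of_le j.isLt hp))
  rw [hz, mul_zero]

theorem stmt19 {n : ℕ} (g N a k : Matrix (Fin n) (Fin n) ℝ)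
    (hg : g.PosDef)
    (hN : N.BlockTriangular id) (hN1 : ∀ i, N i i = 1)
    (ha : ∃ d : Fin n → ℝ, (∀ i, 0 < d i) ∧ a = diagonal d)
    (hk : kᵀ * k = 1) (hdec : g = N * a * k) :
    ∀ u : Matrix (Fin n) (Fin n) ℝ, uᵀ * u = 1 →
      ∀ N' a' k' : Matrix (Fin n) (Fin n) ℝ,
        N'.BlockTriangular id → (∀ i, N' i i = 1) →
        (∃ d : Fin n → ℝ, (∀ i, 0 < d i) ∧ a' = diagonal d) →
        k'ᵀ * k' = 1 → u⁻¹ * g * u = N' * a' * k' →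
        ∀ r : ℕ, 1 ≤ r → ∀ h : r ≤ n, 0 < leadMinor k' r h := by
  intro u hu N' a' k' hN' hN'1 ha' hk' hdec' r hr h
  obtain ⟨d, hd, rfl⟩ := ha'
  have huinv : u⁻¹ = uᵀ := Matrix.inv_eq_left_inv hu
  set M : Matrix (Fin n) (Fin n) ℝ := uᵀ * g * u with hMdef
  -- M is positive definite
  have hMpd : M.PosDef := by
    rw [posDef_iff_dotProduct_mulVec]
    constructor
    · have : M = uᴴ * g * u := by
        rw [hMdef, conjTranspose_eq_transpose_of_trivial]
      rw [this]
      exact isHermitian_conjTranspose_mul_mul u hg.isHermitian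
    · intro x hx
      have hux : u *ᵥ x ≠ 0 := by
        intro h0
        apply hx
        have : uᵀ *ᵥ (u *ᵥ x) = x := by
          rw [mulVec_mulVec, hu, one_mulVec]
        rw [h0, mulVec_zero] at this
        exact this.symm
      have : (star x) ⬝ᵥ M *ᵥ x = (star (u *ᵥ x)) ⬝ᵥ g *ᵥ (u *ᵥ x) := by
        simp only [hMdef, ← mulVec_mulVec]
        rw [dotProduct_mulVec, star_trivial, vecMul_transpose]
        rfl
      rw [this]
      exact hg.dotProduct_mulVec_pos hux
  have hM : M = N' * diagonal d * k' := by rw [hMdef, ← huinv]; exact hdec'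
  -- k'ᵀ = M⁻¹ * (N' * diagonal d)
  have hk'k : k' * k'ᵀ = 1 := mul_eq_one_comm.mp hk'
  have hMk : M * k'ᵀ = N' * diagonal d := by
    rw [hM, mul_assoc (N' * diagonal d), hk'k, mul_one]
  have hMinv : M⁻¹ * M = 1 := Matrix.nonsing_inv_mul M hMpd.det_pos.ne'.isUnit
  have hkT : k'ᵀ = M⁻¹ * (N' * diagonal d) := by
    rw [← hMk, ← mul_assoc, hMinv, one_mul]
  -- the product N' * diagonal d is block triangular
  have hBT : (N' * diagonal d).BlockTriangular id :=
    hN'.mul (blockTriangular_diagonal d)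
  -- split the submatrix
  have hsplit : (k'ᵀ).submatrix (Fin.castLE h) (Fin.castLE h) =
      (M⁻¹).submatrix (Fin.castLE h) (Fin.castLE h) *
        (N' * diagonal d).submatrix (Fin.castLE h) (Fin.castLE h) := by
    rw [hkT]
    exact submatrix_mul_blockTriangular h _ _ hBT
  have hdet1 : 0 < ((M⁻¹).submatrix (Fin.castLE h) (Fin.castLE h)).det :=
    (posDef_submatrix_castLE h hMpd.inv).det_pos
  have hsubBT : ((N' * diagonal d).submatrix (Fin.castLE h) (Fin.castLE h)).BlockTriangular id := by
    intro i j hij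
    exact hBT (show id (Fin.castLE h j) < id (Fin.castLE h i) by simpa using hij)
  have hdet2 : 0 < ((N' * diagonal d).submatrix (Fin.castLE h) (Fin.castLE h)).det := by
    rw [Matrix.det_of_upperTriangular hsubBT]
    refine Finset.prod_pos fun i _ => ?_
    simp only [submatrix_apply, mul_diagonal, hN'1, one_mul]
    exact hd _
  have : leadMinor k' r h = ((k'ᵀ).submatrix (Fin.castLE h) (Fin.castLE h)).det := by
    rw [leadMinor, ← Matrix.det_transpose, transpose_submatrix]
  rw [this, hsplit, det_mul]
  exact mul_pos hdet1 hdet2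
end
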